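/- (No convergence outside the 2/h ball.) Let 0 < a ≤ 1 and h > 0, and let (x_k, y_k) be the gradient descent iterates on f_a with learning rate h. If (x_k, y_k) converges to a point (x*, y*) with x* y* = 1 and (x*)² + (y*)² > 2/h, then x_k y_k = 1 for some finite k. -/

import Mathlib

open Filter

/-- `F_a(s) = C_a (log(e^{s-1}+1) + log(e^{1-s}+1))^a` with
`C_a = 1/(a 2^{a-2} (log 2)^{a-1})`, for `0 < a ≤ 1`. -/
noncomputable def Fa (a : ℝ) (s : ℝ) : ℝ :=
  (1 / (a * (2 : ℝ) ^ (a - 2) * Real.log 2 ^ (a - 1))) *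
    (Real.log (Real.exp (s - 1) + 1) + Real.log (Real.exp (1 - s) + 1)) ^ a

noncomputable def Ga (s : ℝ) : ℝ :=
  Real.log (Real.exp (s - 1) + 1) + Real.log (Real.exp (1 - s) + 1)

noncomputable def Gd (s : ℝ) : ℝ :=
  Real.exp (s - 1) / (Real.exp (s - 1) + 1) - Real.exp (1 - s) / (Real.exp (1 - s) + 1)

lemma expa_pos (t : ℝ) : (0:ℝ) < Real.exp t + 1 := by positivity

lemma Ga_pos (s : ℝ) : 0 < Ga s := by
  have h1 : 0 < Real.log (Real.exp (s - 1) + 1) :=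
    Real.log_pos (by have := Real.exp_pos (s-1); linarith)
  have h2 : 0 < Real.log (Real.exp (1 - s) + 1) :=
    Real.log_pos (by have := Real.exp_pos (1-s); linarith)
  unfold Ga; linarith

lemma Ga_one : Ga 1 = 2 * Real.log 2 := by
  simp [Ga, Real.exp_zero]; norm_num; ring

lemma hasDerivAt_Ga (s : ℝ) : HasDerivAt Ga (Gd s) s := by
  have h1 : HasDerivAt (fun s : ℝ => Real.exp (s - 1) + 1) (Real.exp (s - 1)) s := by
    simpa using (((hasDerivAt_id s).sub_const 1).exp).add_const 1
  have h2 : HasDerivAt (fun s : ℝ => Real.exp (1 - s) + 1) (-Real.exp (1 - s)) s := by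
    simpa using (((hasDerivAt_const s (1:ℝ)).sub (hasDerivAt_id s)).exp).add_const 1
  have := (h1.log (expa_pos _).ne').add (h2.log (expa_pos _).ne')
  rw [show Gd s = Real.exp (s - 1) / (Real.exp (s - 1) + 1) + -Real.exp (1 - s) / (Real.exp (1 - s) + 1) by unfold Gd; ring]
  exact this

lemma Gd_one : Gd 1 = 0 := by simp [Gd]

lemma hasDerivAt_Gd_one : HasDerivAt Gd (1/2) 1 := by
  have he : HasDerivAt (fun s : ℝ => Real.exp (s-1)) (Real.exp ((1:ℝ)-1)) 1 := by
    simpa using ((hasDerivAt_id (1:ℝ)).sub_const 1).exp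
  have he' : HasDerivAt (fun s : ℝ => Real.exp (1-s)) (-Real.exp (1-(1:ℝ))) 1 := by
    simpa using ((hasDerivAt_const (1:ℝ) (1:ℝ)).sub (hasDerivAt_id 1)).exp
  have h1 := he.div (he.add_const 1) (expa_pos _).ne'
  have h2 := he'.div (he'.add_const 1) (expa_pos _).ne'
  have h3 := h1.sub h2
  refine h3.congr_deriv ?_
  simp only [sub_self, Real.exp_zero]
  norm_num

lemma hasDerivAt_Fa (a : ℝ) (s : ℝ) :
    HasDerivAt (Fa a) ((1 / (a * (2:ℝ) ^ (a - 2) * Real.log 2 ^ (a - 1))) *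
      (Gd s * a * Ga s ^ (a - 1))) s := by
  unfold Fa
  have := ((hasDerivAt_Ga s).rpow_const (p := a) (Or.inl (Ga_pos s).ne')).const_mul
    (1 / (a * (2:ℝ) ^ (a - 2) * Real.log 2 ^ (a - 1)))
  simpa [Ga] using this

noncomputable def Fa' (a s : ℝ) : ℝ :=
  (1 / (a * (2:ℝ) ^ (a - 2) * Real.log 2 ^ (a - 1))) * (Gd s * a * Ga s ^ (a - 1))

lemma deriv_Fa (a s : ℝ) : deriv (Fa a) s = Fa' a s := (hasDerivAt_Fa a s).deriv

lemma ratio_limit_val (a : ℝ) (ha0 : 0 < a) :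
    (1 / (a * (2:ℝ) ^ (a - 2) * Real.log 2 ^ (a - 1))) *
      (a * (2 * Real.log 2) ^ (a - 1)) * (1/2) = 1 := by
  have hl2 : (0:ℝ) < Real.log 2 := Real.log_pos one_lt_two
  have h1 : ((2:ℝ) * Real.log 2) ^ (a-1) = (2:ℝ)^(a-1) * Real.log 2 ^ (a-1) :=
    Real.mul_rpow (by norm_num) hl2.le
  have h2 : (2:ℝ)^(a-1) = (2:ℝ)^(a-2) * 2 := by
    rw [show a - 1 = (a-2) + 1 by ring, Real.rpow_add (by norm_num), Real.rpow_one]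
  have h3 : (2:ℝ)^(a-2) ≠ 0 := (Real.rpow_pos_of_pos (by norm_num) _).ne'
  have h4 : Real.log 2 ^ (a-1) ≠ 0 := (Real.rpow_pos_of_pos hl2 _).ne'
  rw [h1, h2]
  field_simp

lemma tendsto_ratio (a : ℝ) (ha0 : 0 < a) :
    Tendsto (fun s => deriv (Fa a) s / (s - 1)) (nhdsWithin 1 {(1:ℝ)}ᶜ) (nhds 1) := by
  have hslope : Tendsto (fun s => Gd s / (s - 1)) (nhdsWithin 1 {(1:ℝ)}ᶜ) (nhds (1/2)) := by
    have h0 := hasDerivAt_iff_tendsto_slope.mp hasDerivAt_Gd_one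
    have heq : slope Gd 1 = fun s => Gd s / (s - 1) := by
      funext s; simp [slope, Gd_one, div_eq_inv_mul]
    rw [heq] at h0; exact h0
  set C := (1 / (a * (2:ℝ) ^ (a - 2) * Real.log 2 ^ (a - 1))) with hCdef
  have hG : Tendsto (fun s => Ga s ^ (a-1)) (nhdsWithin 1 {(1:ℝ)}ᶜ)
      (nhds ((2*Real.log 2) ^ (a-1))) := by
    have hGcont : ContinuousAt (fun s => Ga s ^ (a-1)) 1 :=
      (hasDerivAt_Ga 1).continuousAt.rpow_const (Or.inl (Ga_pos 1).ne')
    have h5 : Tendsto (fun s => Ga s ^ (a-1)) (nhdsWithin (1:ℝ) {(1:ℝ)}ᶜ)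
        (nhds (Ga 1 ^ (a-1))) := hGcont.tendsto.mono_left nhdsWithin_le_nhds
    rwa [Ga_one] at h5
  have hfin := (hG.const_mul (C*a)).mul hslope
  have heq2 : (fun s => deriv (Fa a) s / (s-1))
      = fun s => (C*a) * Ga s ^ (a-1) * (Gd s / (s-1)) := by
    funext s; rw [deriv_Fa]; unfold Fa'; rw [hCdef]; ring
  rw [heq2]
  have key : C * a * (2*Real.log 2)^(a-1) * (1/2) = 1 := by
    have hv := ratio_limit_val a ha0
    rw [hCdef]; linear_combination hv
  rw [key] at hfin
  exact hfin

lemma deriv_Fa_close (a : ℝ) (ha0 : 0 < a) (ε : ℝ) (hε : 0 < ε) :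
    ∃ δ > 0, ∀ s : ℝ, s ≠ 1 → |s - 1| < δ → |deriv (Fa a) s - (s - 1)| ≤ ε * |s - 1| := by
  have h1 : ∀ᶠ s in nhdsWithin 1 {(1:ℝ)}ᶜ, |deriv (Fa a) s / (s-1) - 1| < ε := by
    have := Metric.tendsto_nhds.mp (tendsto_ratio a ha0) ε hε
    simpa [Real.dist_eq] using this
  rw [Filter.Eventually, Metric.mem_nhdsWithin_iff] at h1
  obtain ⟨δ, hδ, hδ'⟩ := h1
  refine ⟨δ, hδ, fun s hs hsd => ?_⟩
  have h2 : |deriv (Fa a) s / (s-1) - 1| < ε :=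
    hδ' ⟨by simpa [Metric.mem_ball, Real.dist_eq] using hsd, hs⟩
  have hd : s - 1 ≠ 0 := sub_ne_zero.mpr hs
  have h3 : deriv (Fa a) s - (s-1) = (deriv (Fa a) s/(s-1) - 1) * (s-1) := by
    field_simp
  rw [h3, abs_mul]
  exact mul_le_mul_of_nonneg_right h2.le (abs_nonneg _)


set_option maxHeartbeats 1000000 in
/-- GD on `f_a` cannot converge to a minimizer outside the `2/h` ball unless
some iterate hits the set of minimizers exactly. -/
theorem stmt_16 (a : ℝ) (ha0 : 0 < a) (ha1 : a ≤ 1) (h : ℝ) (hh : 0 < h)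
    (x y : ℕ → ℝ)
    (hGD : ∀ k, x (k + 1) = x k - h * deriv (Fa a) (x k * y k) * y k ∧
                y (k + 1) = y k - h * deriv (Fa a) (x k * y k) * x k)
    (xs ys : ℝ)
    (hconv : Tendsto (fun k => (x k, y k)) atTop (nhds (xs, ys)))
    (hmin : xs * ys = 1) (hsharp : xs ^ 2 + ys ^ 2 > 2 / h) :
    ∃ k, x k * y k = 1 := by
  by_contra hKperp
  push_neg at hKperp
  have hx : Tendsto x atTop (nhds xs) := by
    have := (continuous_fst.tendsto (xs, ys)).comp hconv
    exact this
  have hy : Tendsto y atTop (nhds ys) := by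
    have := (continuous_snd.tendsto (xs, ys)).comp hconv
    exact this
  have hs : Tendsto (fun k => x k * y k) atTop (nhds 1) := by
    simpa [hmin] using hx.mul hy
  have hr : Tendsto (fun k => x k ^ 2 + y k ^ 2) atTop (nhds (xs ^ 2 + ys ^ 2)) :=
    (hx.pow 2).add (hy.pow 2)
  obtain ⟨R, hRdef⟩ : ∃ R, xs ^ 2 + ys ^ 2 = R := ⟨_, rfl⟩
  rw [hRdef] at hr hsharp
  have hhR : 2 < h * R := by
    have := (div_lt_iff₀ hh).mp hsharp
    linarith
  obtain ⟨c, hcdef⟩ : ∃ c, h * R - 2 = c := ⟨_, rfl⟩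
  have hc : 0 < c := by linarith
  obtain ⟨ε, hεdef⟩ : ∃ ε, c / (4 * (2 + c)) = ε := ⟨_, rfl⟩
  have hε : 0 < ε := by rw [← hεdef]; positivity
  have h2c : (0:ℝ) < 2 + c := by linarith
  have hε1 : (2 + c) * ε ≤ c / 4 := by
    rw [← hεdef]
    have heq : (2 + c) * (c / (4 * (2 + c))) = c / 4 := by
      field_simp
    exact le_of_eq heq
  have hε2 : ε ≤ 1 := by
    rw [← hεdef, div_le_one (by positivity)]
    linarith
  obtain ⟨δ₀, hδ₀, hδ₀'⟩ := deriv_Fa_close a ha0 ε hε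
  obtain ⟨δ, hδdef⟩ : ∃ δ, min δ₀ (min 1 (c / (32 * h^2))) = δ := ⟨_, rfl⟩
  have hδpos : 0 < δ := by
    rw [← hδdef]
    exact lt_min hδ₀ (lt_min one_pos (by positivity))
  have hδ1 : δ ≤ 1 := by
    rw [← hδdef]; exact le_trans (min_le_right _ _) (min_le_left _ _)
  have hδ2 : δ ≤ c / (32 * h^2) := by
    rw [← hδdef]; exact le_trans (min_le_right _ _) (min_le_right _ _)
  have hδ3 : δ ≤ δ₀ := by rw [← hδdef]; exact min_le_left _ _
  have hδh : 8 * h^2 * δ ≤ c / 4 := by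
    have heq : 8*h^2*(c/(32*h^2)) = c/4 := by field_simp; ring
    calc 8*h^2*δ ≤ 8*h^2*(c/(32*h^2)) :=
          mul_le_mul_of_nonneg_left hδ2 (by positivity)
      _ = c/4 := heq
  obtain ⟨ρ, hρ1⟩ : ∃ ρ, R - c/(4*h) = ρ := ⟨_, rfl⟩
  have hρmul : h * ρ = 2 + (3/4)*c := by
    rw [← hρ1]
    have hfs : h * (R - c/(4*h)) = h*R - c/4 := by field_simp
    linarith
  -- eventual bounds
  have hev1 : ∀ᶠ k in atTop, |x k * y k - 1| < δ := by
    have := Metric.tendsto_nhds.mp hs δ hδpos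
    simpa [Real.dist_eq] using this
  have hev2 : ∀ᶠ k in atTop, ρ < x k ^ 2 + y k ^ 2 :=
    hr.eventually (eventually_gt_nhds (by
      rw [← hρ1]
      have : 0 < c / (4*h) := by positivity
      linarith))
  obtain ⟨K, hKp⟩ := eventually_atTop.mp (hev1.and hev2)
  obtain ⟨q, hqdef⟩ : ∃ q, 1 + c / 4 = q := ⟨_, rfl⟩
  have hq1 : 1 < q := by rw [← hqdef]; linarith
  have hq0 : 0 < q := by linarith
  -- the expansion step
  have step : ∀ k, K ≤ k → q * |x k * y k - 1| ≤ |x (k+1) * y (k+1) - 1| := by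
    intro k hk
    obtain ⟨hδk, hrk⟩ := hKp k hk
    have hrec : x (k+1) * y (k+1) - 1 = (x k * y k - 1)
        - h * deriv (Fa a) (x k * y k) * (x k ^ 2 + y k ^ 2)
        + h^2 * (deriv (Fa a) (x k * y k))^2 * ((x k * y k - 1) + 1) := by
      obtain ⟨h1, h2⟩ := hGD k
      rw [h1, h2]; ring
    obtain ⟨u, hu⟩ : ∃ u, x k * y k - 1 = u := ⟨_, rfl⟩
    obtain ⟨L, hL⟩ : ∃ L, deriv (Fa a) (x k * y k) = L := ⟨_, rfl⟩
    obtain ⟨r, hrr⟩ : ∃ r, x k ^ 2 + y k ^ 2 = r := ⟨_, rfl⟩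
    rw [hu] at hδk
    rw [hrr] at hrk
    rw [hu, hL, hrr] at hrec
    rw [hu]
    have hr0 : 0 ≤ r := by rw [← hrr]; positivity
    have hu0 : u ≠ 0 := by rw [← hu]; exact sub_ne_zero.mpr (hKperp k)
    have habsu : 0 < |u| := abs_pos.mpr hu0
    have hLb : |L - u| ≤ ε * |u| := by
      have h9 := hδ₀' (x k * y k) (hKperp k)
        (by rw [hu]; exact lt_of_lt_of_le hδk hδ3)
      rw [hu, hL] at h9; exact h9
    have hLlow : (1 - ε) * |u| ≤ |L| := by
      have h1 : |u| - |L| ≤ |L - u| := by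
        have h2 := abs_sub_abs_le_abs_sub u L
        rwa [abs_sub_comm u L] at h2
      rw [sub_mul, one_mul]
      linarith [h1, hLb]
    have hLhigh : |L| ≤ 2 * |u| := by
      have h1 : |L| - |u| ≤ |L - u| := abs_sub_abs_le_abs_sub L u
      have h3 := mul_le_mul_of_nonneg_right hε2 (abs_nonneg u)
      rw [one_mul] at h3
      linarith [h1, hLb, h3]
    have hsab : |u + 1| ≤ 2 := by
      calc |u + 1| ≤ |u| + |(1:ℝ)| := abs_add_le u 1
        _ ≤ δ + 1 := by rw [abs_one]; linarith
        _ ≤ 2 := by linarith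
    -- triangle inequality
    have e1 : h*L*r = (u + h^2*L^2*(u+1)) - (u - h*L*r + h^2*L^2*(u+1)) := by ring
    have e2 : |h*L*r| ≤ |u + h^2*L^2*(u+1)| + |u - h*L*r + h^2*L^2*(u+1)| := by
      have e2' := abs_sub (u + h^2*L^2*(u+1)) (u - h*L*r + h^2*L^2*(u+1))
      have heq : u + h^2*L^2*(u+1) - (u - h*L*r + h^2*L^2*(u+1)) = h*L*r := by ring
      rwa [heq] at e2'
    have e3 : |u + h^2*L^2*(u+1)| ≤ |u| + h^2*L^2*|u+1| := by
      calc |u + h^2*L^2*(u+1)| ≤ |u| + |h^2*L^2*(u+1)| := abs_add_le _ _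
        _ = |u| + h^2*L^2*|u+1| := by
            rw [abs_mul, abs_mul]
            rw [abs_of_nonneg (by positivity : (0:ℝ) ≤ h^2), abs_of_nonneg (sq_nonneg L)]
    have e4 : |h*L*r| = h * |L| * r := by
      rw [abs_mul, abs_mul, abs_of_pos hh, abs_of_nonneg hr0]
    have tri : h * |L| * r - |u| - h^2*L^2*|u+1| ≤ |x (k+1) * y (k+1) - 1| := by
      rw [hrec]; rw [e4] at e2; linarith
    -- lower bound for the dominant term
    have A0 : ρ * ((1-ε)*|u|) ≤ r * |L| :=
      mul_le_mul hrk.le hLlow (mul_nonneg (by linarith) (abs_nonneg u)) hr0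
    have A1 : h * (ρ * ((1-ε)*|u|)) ≤ h * (r * |L|) :=
      mul_le_mul_of_nonneg_left A0 hh.le
    have t4 : (2 + (3/4)*c) * ((1-ε)*|u|) ≤ h * (r * |L|) := by
      calc (2 + (3/4)*c) * ((1-ε)*|u|) = (h * ρ) * ((1-ε)*|u|) := by rw [hρmul]
        _ = h * (ρ * ((1-ε)*|u|)) := by ring
        _ ≤ h * (r * |L|) := A1
    -- upper bound for the quadratic term
    have hL2 : L^2 ≤ 4 * |u|^2 := by
      calc L^2 = |L|^2 := (sq_abs L).symm
        _ ≤ (2*|u|)^2 := by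
            apply pow_le_pow_left₀ (abs_nonneg L) hLhigh
        _ = 4 * |u|^2 := by ring
    have t2 : h^2*L^2*|u+1| ≤ 8*h^2*|u|^2 := by
      have w1 : h^2*L^2 ≤ h^2*(4*|u|^2) := mul_le_mul_of_nonneg_left hL2 (by positivity)
      have w2 : h^2*L^2*|u+1| ≤ (h^2*(4*|u|^2)) * 2 :=
        mul_le_mul w1 hsab (abs_nonneg _) (by positivity)
      linarith
    have t3 : 8*h^2*|u|^2 ≤ (c/4)*|u| := by
      have q1 : 8*h^2*|u| ≤ 8*h^2*δ := mul_le_mul_of_nonneg_left hδk.le (by positivity)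
      calc 8*h^2*|u|^2 = (8*h^2*|u|)*|u| := by ring
        _ ≤ (8*h^2*δ)*|u| := mul_le_mul_of_nonneg_right q1 (abs_nonneg u)
        _ ≤ (c/4)*|u| := mul_le_mul_of_nonneg_right hδh (abs_nonneg u)
    -- products needed for the linear combination
    have P1 : ((2+c)*ε)*|u| ≤ (c/4)*|u| := mul_le_mul_of_nonneg_right hε1 (abs_nonneg u)
    have P2 : 0 ≤ c*(ε*|u|) := by positivity
    have main : q * |u| ≤ h * |L| * r - |u| - h^2*L^2*|u+1| := by
      have hq' : q = 1 + c/4 := hqdef.symm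
      have hh2 : h * (r * |L|) = h * |L| * r := by ring
      rw [hh2] at t4
      rw [← hqdef]
      have P1' : (2+c)*ε*|u| = 2*(ε*|u|) + c*(ε*|u|) := by ring
      have t4' : (2 + (3/4)*c) * ((1-ε)*|u|)
          = 2*|u| + (3/4)*(c*|u|) - 2*(ε*|u|) - (3/4)*(c*(ε*|u|)) := by ring
      linarith [t4, t2, t3, P1, P2]
    linarith
  -- geometric growth contradicts convergence
  have grow : ∀ n : ℕ, q ^ n * |x K * y K - 1| ≤ |x (K+n) * y (K+n) - 1| := by
    intro n
    induction n with
    | zero => simp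
    | succ n ih =>
      have hstep := step (K+n) (Nat.le_add_right _ _)
      calc q ^ (n+1) * |x K * y K - 1| = q * (q^n * |x K * y K - 1|) := by ring
        _ ≤ q * |x (K+n) * y (K+n) - 1| := mul_le_mul_of_nonneg_left ih hq0.le
        _ ≤ |x (K+n+1) * y (K+n+1) - 1| := hstep
  have huK : 0 < |x K * y K - 1| := abs_pos.mpr (sub_ne_zero.mpr (hKperp K))
  have hbound : ∀ n : ℕ, q^n * |x K * y K - 1| < δ := fun n =>
    lt_of_le_of_lt (grow n) (hKp (K+n) (Nat.le_add_right _ _)).1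
  obtain ⟨n, hn⟩ := ((tendsto_pow_atTop_atTop_of_one_lt hq1).eventually_gt_atTop
    (δ / |x K * y K - 1|)).exists
  have hcontra : δ < q^n * |x K * y K - 1| := by
    rw [div_lt_iff₀ huK] at hn; linarith
  linarith [hbound n]
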